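/- arXiv:1809.02192 — 2 statements merged into one kernel-verified Lean document; each statement's English description precedes it below -/
import Mathlib

section
/- The divergence operator maps the space x·P_k(ℝ²) = {x p(x) : p ∈ P_k(ℝ²)} linearly, injectively, and onto P_k(ℝ²), for any k ≥ 0. -/
open MvPolynomial

lemma div_monomial (α : Fin 2 →₀ ℕ) (c : ℝ) :
    pderiv 0 (X 0 * monomial α c) + pderiv 1 (X 1 * monomial α c)
      = monomial α (((α 0 : ℝ) + α 1 + 2) * c) := by
  have h : ∀ i : Fin 2, X i * monomial α c = monomial (α + Finsupp.single i 1) c := by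
    intro i
    rw [X, monomial_mul, one_mul, add_comm]
  rw [h 0, h 1, pderiv_monomial, pderiv_monomial]
  simp [Finsupp.add_apply, Finsupp.single_apply]
  rw [← map_add]
  congr 1
  ring

lemma div_coeff (p : MvPolynomial (Fin 2) ℝ) (β : Fin 2 →₀ ℕ) :
    coeff β (pderiv 0 (X 0 * p) + pderiv 1 (X 1 * p))
      = ((β 0 : ℝ) + β 1 + 2) * coeff β p := by
  induction p using MvPolynomial.induction_on' with
  | monomial α c =>
      rw [div_monomial, coeff_monomial, coeff_monomial]
      split
      · subst ‹_› ; rfl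
      · ring
  | add p q hp hq =>
      rw [mul_add, mul_add, map_add, map_add, add_add_add_comm, coeff_add, hp, hq,
        coeff_add]
      ring

/-- The divergence operator maps `x·P_k(ℝ²)` linearly, injectively, and onto `P_k(ℝ²)`:
for every `q` of total degree at most `k` there is a unique `p` of total degree at most
`k` with `div (x p) = q`. -/
theorem stmt_4 (k : ℕ) :
    ∀ q : MvPolynomial (Fin 2) ℝ, q.totalDegree ≤ k →
      ∃! p : MvPolynomial (Fin 2) ℝ, p.totalDegree ≤ k ∧
        pderiv 0 (X 0 * p) + pderiv 1 (X 1 * p) = q := by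
  intro q hq
  set p : MvPolynomial (Fin 2) ℝ :=
    ∑ α ∈ q.support, monomial α (coeff α q / ((α 0 : ℝ) + α 1 + 2)) with hp
  have hpos : ∀ β : Fin 2 →₀ ℕ, (0:ℝ) < (β 0 : ℝ) + β 1 + 2 := by
    intro β; positivity
  have hcoeff : ∀ β, coeff β p = coeff β q / ((β 0 : ℝ) + β 1 + 2) := by
    intro β
    rw [hp, coeff_sum]
    simp only [coeff_monomial]
    rw [Finset.sum_ite_eq' q.support β]
    split
    · rfl
    · rw [notMem_support_iff.mp ‹_›, zero_div]
  refine ⟨p, ⟨?_, ?_⟩, ?_⟩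
  · refine le_trans ?_ hq
    apply totalDegree_le_of_support_subset
    intro β hβ
    rw [mem_support_iff] at hβ ⊢
    intro h0
    exact hβ (by rw [hcoeff, h0, zero_div])
  · ext β
    rw [div_coeff, hcoeff, mul_div_cancel₀ _ (ne_of_gt (hpos β))]
  · rintro p' ⟨-, h⟩
    ext β
    have h1 : ((β 0 : ℝ) + β 1 + 2) * coeff β p' = coeff β q := by
      rw [← div_coeff, h]
    have h2 : ((β 0 : ℝ) + β 1 + 2) * coeff β p = coeff β q := by
      rw [hcoeff, mul_div_cancel₀ _ (ne_of_gt (hpos β))]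
    exact mul_left_cancel₀ (ne_of_gt (hpos β)) (h1.trans h2.symm)
end

section
/- The kernel of the divergence operator on vector polynomials P_r²(ℝ²) is exactly curl P_{r+1}(ℝ²), where curl φ = (∂φ/∂x₂, −∂φ/∂x₁). -/
open MvPolynomial

namespace Stmt5Aux

noncomputable def antider (i : Fin 2) (p : MvPolynomial (Fin 2) ℝ) :
    MvPolynomial (Fin 2) ℝ :=
  (AddMonoidAlgebra.coeff p).sum fun m c => monomial (m + Finsupp.single i 1) (c / (m i + 1))

lemma antider_zero (i : Fin 2) : antider i 0 = 0 := by
  simp [antider]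

lemma antider_monomial (i : Fin 2) (m : Fin 2 →₀ ℕ) (c : ℝ) :
    antider i (monomial m c) = monomial (m + Finsupp.single i 1) (c / (m i + 1)) := by
  rcases eq_or_ne c 0 with rfl | hc
  · simp [antider]
  · unfold antider
    rw [MvPolynomial.sum_monomial_eq]
    simp

lemma antider_add (i : Fin 2) (p q : MvPolynomial (Fin 2) ℝ) :
    antider i (p + q) = antider i p + antider i q := by
  unfold antider
  classical
  rw [AddMonoidAlgebra.coeff_add]
  exact Finsupp.sum_add_index' (fun m => by simp) (fun m c c' => by rw [add_div, map_add])

lemma pderiv_antider (i : Fin 2) (p : MvPolynomial (Fin 2) ℝ) :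
    pderiv i (antider i p) = p := by
  induction p using MvPolynomial.induction_on' with
  | monomial m c =>
    rw [antider_monomial, pderiv_monomial]
    have h1 : ((m + Finsupp.single i 1 : Fin 2 →₀ ℕ)) i = m i + 1 := by simp
    have h2 : m + Finsupp.single i 1 - Finsupp.single i 1 = m := by simp
    rw [h1, h2]
    congr 1
    push_cast
    field_simp
  | add p q hp hq => rw [antider_add, map_add, hp, hq]

lemma pderiv_antider_comm (i j : Fin 2) (hij : j ≠ i) (p : MvPolynomial (Fin 2) ℝ) :
    pderiv j (antider i p) = antider i (pderiv j p) := by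
  induction p using MvPolynomial.induction_on' with
  | monomial m c =>
    rw [antider_monomial, pderiv_monomial, pderiv_monomial, antider_monomial]
    have h1 : ((m + Finsupp.single i 1 : Fin 2 →₀ ℕ)) j = m j := by
      simp [Finsupp.single_apply, hij.symm]
    have h2 : ((m - Finsupp.single j 1 : Fin 2 →₀ ℕ)) i = m i := by
      simp [Finsupp.tsub_apply, Finsupp.single_apply, hij]
    rw [h1, h2]
    rcases Nat.eq_zero_or_pos (m j) with h0 | h0
    · simp [h0]
    · have h3 : m + Finsupp.single i 1 - Finsupp.single j 1
          = m - Finsupp.single j 1 + Finsupp.single i 1 := by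
        ext k
        simp only [Finsupp.add_apply, Finsupp.tsub_apply, Finsupp.single_apply]
        rcases eq_or_ne k i with rfl | hki
        · simp [hij]
        · rcases eq_or_ne k j with rfl | hkj
          · simp [hki, h0, Nat.sub_add_comm h0]
          · simp [hki, Ne.symm hkj]
      rw [h3]
      congr 1
      ring
  | add p q hp hq => simp only [antider_add, map_add, hp, hq]

lemma totalDegree_antider_le (i : Fin 2) (p : MvPolynomial (Fin 2) ℝ) (n : ℕ)
    (h : p.totalDegree ≤ n) : (antider i p).totalDegree ≤ n + 1 := by
  unfold antider Finsupp.sum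
  refine MvPolynomial.totalDegree_finsetSum_le ?_
  intro m hm
  refine (totalDegree_monomial_le _ _).trans ?_
  rw [Finsupp.sum_add_index (by simp) (by simp)]
  have : m.sum (fun _ e => e) ≤ n := le_trans (le_totalDegree hm) h
  have h' := Nat.add_le_add this (le_refl 1)
  simp at h' ⊢
  exact h'

lemma pderiv_comm (i j : Fin 2) (p : MvPolynomial (Fin 2) ℝ) :
    pderiv i (pderiv j p) = pderiv j (pderiv i p) := by
  rcases eq_or_ne i j with rfl | hij
  · rfl
  induction p using MvPolynomial.induction_on' with
  | monomial m c =>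
    rw [pderiv_monomial, pderiv_monomial, pderiv_monomial, pderiv_monomial]
    have h1 : ((m - Finsupp.single j 1 : Fin 2 →₀ ℕ)) i = m i := by
      simp [Finsupp.tsub_apply, Finsupp.single_apply, hij.symm]
    have h2 : ((m - Finsupp.single i 1 : Fin 2 →₀ ℕ)) j = m j := by
      simp [Finsupp.tsub_apply, Finsupp.single_apply, hij]
    have h3 : m - Finsupp.single j 1 - Finsupp.single i 1
        = m - Finsupp.single i 1 - Finsupp.single j 1 := by
      ext k
      simp only [Finsupp.tsub_apply, Finsupp.single_apply]
      omega
    rw [h1, h2, h3]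
    ring_nf
  | add p q hp hq => simp only [map_add, hp, hq]

lemma totalDegree_pderiv_le (i : Fin 2) (p : MvPolynomial (Fin 2) ℝ) (n : ℕ)
    (h : p.totalDegree ≤ n + 1) : (pderiv i p).totalDegree ≤ n := by
  conv_lhs => rw [p.as_sum]
  rw [map_sum]
  refine MvPolynomial.totalDegree_finsetSum_le ?_
  intro m hm
  rw [pderiv_monomial]
  rcases Nat.eq_zero_or_pos (m i) with h0 | h0
  · rw [h0]
    simp
  · refine (totalDegree_monomial_le _ _).trans ?_
    have hms : m.sum (fun _ e => e) ≤ n + 1 := le_trans (le_totalDegree hm) h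
    have hkey : (m - Finsupp.single i 1).sum (fun _ e => e) + 1 = m.sum (fun _ e => e) := by
      have hm' : m - Finsupp.single i 1 + Finsupp.single i 1 = m := by
        ext k
        simp only [Finsupp.add_apply, Finsupp.tsub_apply, Finsupp.single_apply]
        rcases eq_or_ne k i with rfl | hk
        · simp; omega
        · simp [Ne.symm hk]
      conv_rhs => rw [← hm']
      rw [Finsupp.sum_add_index (by simp) (by simp)]
      simp
    simp only [Function.id_def] at *
    omega

end Stmt5Aux

open Stmt5Aux in
/-- The kernel of the divergence operator on vector polynomials `P_r²(ℝ²)` is exactly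
`curl P_{r+1}(ℝ²)`, where `curl φ = (∂φ/∂x₂, −∂φ/∂x₁)`. -/
theorem stmt_5 (r : ℕ) :
    ∀ v₁ v₂ : MvPolynomial (Fin 2) ℝ, v₁.totalDegree ≤ r → v₂.totalDegree ≤ r →
      (pderiv 0 v₁ + pderiv 1 v₂ = 0 ↔
        ∃ φ : MvPolynomial (Fin 2) ℝ, φ.totalDegree ≤ r + 1 ∧
          v₁ = pderiv 1 φ ∧ v₂ = -pderiv 0 φ) := by
  intro v₁ v₂ h₁ h₂
  constructor
  · intro hdiv
    set ψ := antider 1 v₁ with hψ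
    have hψd : pderiv 1 ψ = v₁ := pderiv_antider 1 v₁
    set g : MvPolynomial (Fin 2) ℝ := -v₂ - pderiv 0 ψ with hg
    have hg1 : pderiv 1 g = 0 := by
      have : pderiv 1 (pderiv 0 ψ) = pderiv 0 v₁ := by
        rw [pderiv_comm, hψd]
      rw [hg, map_sub, map_neg, this]
      have : pderiv 1 v₂ = -pderiv 0 v₁ := by linear_combination hdiv
      rw [this]
      ring
    set h : MvPolynomial (Fin 2) ℝ := antider 0 g with hh
    have hh0 : pderiv 0 h = g := pderiv_antider 0 g
    have hh1 : pderiv 1 h = 0 := by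
      rw [hh, pderiv_antider_comm 0 1 (by decide), hg1, antider_zero]
    refine ⟨ψ + h, ?_, ?_, ?_⟩
    · have d1 : ψ.totalDegree ≤ r + 1 := totalDegree_antider_le 1 v₁ r h₁
      have d2 : (pderiv 0 ψ).totalDegree ≤ r := totalDegree_pderiv_le 0 ψ r d1
      have d3 : g.totalDegree ≤ r := by
        rw [hg, sub_eq_add_neg]
        refine (totalDegree_add _ _).trans (max_le ?_ ?_)
        · rwa [totalDegree_neg]
        · rwa [totalDegree_neg]
      have d4 : h.totalDegree ≤ r + 1 := totalDegree_antider_le 0 g r d3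
      exact (totalDegree_add _ _).trans (max_le d1 d4)
    · rw [map_add, hψd, hh1, add_zero]
    · rw [map_add, hh0, hg]; ring
  · rintro ⟨φ, -, rfl, rfl⟩
    rw [map_neg, pderiv_comm]
    ring
end
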